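/- Let X be a stationary random vector on Λ = (ℤ/Nℤ)^r with discrete Fourier transform X̂. For integers k, k', Cov([X̂(ω)]^k, [X̂(ω')]^{k'}) = 0 whenever kω ≠ k'ω' (modulo 2π in each coordinate), where [z]^k = |z| e^{ikφ(z)} is the phase harmonic. -/

import Mathlib

open MeasureTheory

/-- Discrete Fourier transform on `Λ = (ℤ/Nℤ)^r`, at frequency `ω = 2πm/N`. -/
noncomputable def dft {N r : ℕ} [NeZero N] (x : (Fin r → ZMod N) → ℂ)
    (m : Fin r → ZMod N) : ℂ :=
  ∑ u : Fin r → ZMod N, x u *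
    Complex.exp (-(2 * (Real.pi : ℂ) * Complex.I *
      (∑ i, ((m i).val : ℂ) * ((u i).val : ℂ)) / (N : ℂ)))

/-- Covariance `Cov(A,B) = E[A B*] − E[A] E[B]*` of complex random variables. -/
noncomputable def ccov {Ω : Type*} [MeasurableSpace Ω] (μ : Measure Ω)
    (A B : Ω → ℂ) : ℂ :=
  (∫ ω, A ω * (starRingEnd ℂ) (B ω) ∂μ) -
    (∫ ω, A ω ∂μ) * (starRingEnd ℂ) (∫ ω, B ω ∂μ)

/-- The phase harmonic `[z]^k = |z| e^{i k φ(z)}`, with `[0]^k = 0`. -/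
noncomputable def phaseHarmonic (k : ℤ) (z : ℂ) : ℂ :=
  ((‖z‖ : ℝ) : ℂ) * Complex.exp ((k : ℂ) * (Complex.arg z : ℂ) * Complex.I)


open Complex

noncomputable def charE (N : ℕ) [NeZero N] (t : ZMod N) : ℂ :=
  Complex.exp (-(2 * (Real.pi : ℂ) * Complex.I * ((t.val : ℕ) : ℂ)) / N)

lemma exp_congr {N : ℕ} [NeZero N] {a b : ℤ} (h : ((a : ZMod N)) = (b : ZMod N)) :
    Complex.exp (-(2 * (Real.pi : ℂ) * Complex.I * (a : ℂ)) / N) =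
    Complex.exp (-(2 * (Real.pi : ℂ) * Complex.I * (b : ℂ)) / N) := by
  have hN : (N : ℂ) ≠ 0 := Nat.cast_ne_zero.2 (NeZero.ne N)
  obtain ⟨c, hc⟩ : (N : ℤ) ∣ (b - a) := by
    rwa [← ZMod.intCast_zmod_eq_zero_iff_dvd, Int.cast_sub, sub_eq_zero, eq_comm]
  have hb : (b : ℂ) = (a : ℂ) + (N : ℂ) * (c : ℂ) := by
    have h2 : ((b : ℂ)) - a = (N : ℂ) * c := by exact_mod_cast congrArg (Int.cast : ℤ → ℂ) hc
    linear_combination h2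
  rw [hb, show -(2 * (Real.pi : ℂ) * Complex.I * ((a : ℂ) + (N : ℂ) * c)) / N
      = -(2 * (Real.pi : ℂ) * Complex.I * (a : ℂ)) / N + ((-c : ℤ) : ℂ) * (2 * Real.pi * Complex.I) by
        push_cast; field_simp; ring,
    Complex.exp_add, Complex.exp_int_mul_two_pi_mul_I, mul_one]

lemma charE_intCast {N : ℕ} [NeZero N] (a : ℤ) :
    charE N ((a : ZMod N)) = Complex.exp (-(2 * (Real.pi : ℂ) * Complex.I * (a : ℂ)) / N) := by
  have h : (((((a : ZMod N).val : ℕ) : ℤ) : ZMod N)) = ((a : ZMod N)) := by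
    push_cast [ZMod.natCast_val, ZMod.cast_id]; rfl
  have h2 := exp_congr (N := N) h
  rw [charE]
  rw [← h2]
  norm_num

lemma charE_natCast {N : ℕ} [NeZero N] (a : ℕ) :
    charE N ((a : ZMod N)) = Complex.exp (-(2 * (Real.pi : ℂ) * Complex.I * (a : ℂ)) / N) := by
  have := charE_intCast (N := N) (a : ℤ)
  rw [Int.cast_natCast] at this
  rw [this]
  norm_num

lemma charE_add {N : ℕ} [NeZero N] (s t : ZMod N) :
    charE N (s + t) = charE N s * charE N t := by
  have h1 : s + t = (((s.val + t.val : ℕ)) : ZMod N) := by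
    push_cast [ZMod.natCast_val, ZMod.cast_id]; rfl
  rw [h1, charE_natCast]
  unfold charE
  rw [← Complex.exp_add]
  congr 1
  push_cast
  ring

lemma charE_zero {N : ℕ} [NeZero N] : charE N 0 = 1 := by
  simp [charE]

lemma charE_ne_one {N : ℕ} [NeZero N] {t : ZMod N} (ht : t ≠ 0) : charE N t ≠ 1 := by
  intro h
  rw [charE, Complex.exp_eq_one_iff] at h
  obtain ⟨n, hn⟩ := h
  have hN : (N : ℂ) ≠ 0 := Nat.cast_ne_zero.2 (NeZero.ne N)
  have hpi : (Real.pi : ℂ) ≠ 0 := Complex.ofReal_ne_zero.2 Real.pi_ne_zero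
  have h2 : (2 : ℂ) * Real.pi * Complex.I ≠ 0 := by
    simp [hpi, Complex.I_ne_zero]
  have key : ((t.val : ℕ) : ℂ) = ((-(n * N) : ℤ) : ℂ) := by
    rw [div_eq_iff hN] at hn
    push_cast
    apply mul_left_cancel₀ h2
    linear_combination -hn
  have hv' : ((t.val : ℕ) : ℤ) = -(n * N) := by exact_mod_cast key
  have hdvd : N ∣ t.val := by
    have : (N : ℤ) ∣ ((t.val : ℕ) : ℤ) := ⟨-n, by linarith [hv']⟩
    exact_mod_cast this
  have hz := Nat.eq_zero_of_dvd_of_lt hdvd (ZMod.val_lt t)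
  exact ht (by rwa [← ZMod.val_eq_zero])

lemma charE_conj {N : ℕ} [NeZero N] (t : ZMod N) :
    (starRingEnd ℂ) (charE N t) = charE N (-t) := by
  have h1 : (-t) = (((-(t.val : ℤ)) : ℤ) : ZMod N) := by
    push_cast [ZMod.natCast_val, ZMod.cast_id]; rfl
  rw [h1, charE_intCast, charE, ← Complex.exp_conj]
  congr 1
  rw [show ((-(t.val : ℤ) : ℤ) : ℂ) = -((t.val : ℕ) : ℂ) by push_cast; ring]
  simp only [map_div₀, map_neg, map_mul, Complex.conj_I, map_natCast, map_ofNat,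
    Complex.conj_ofReal]
  ring


lemma expTerm_eq {N r : ℕ} [NeZero N] (m u : Fin r → ZMod N) :
    Complex.exp (-(2 * (Real.pi : ℂ) * Complex.I *
      (∑ i, ((m i).val : ℂ) * ((u i).val : ℂ)) / (N : ℂ)))
    = charE N (∑ i, m i * u i) := by
  have h1 : (∑ i, ((m i).val : ℂ) * ((u i).val : ℂ))
      = (((∑ i, (m i).val * (u i).val : ℕ)) : ℂ) := by push_cast; rfl
  rw [h1, show -(2 * (Real.pi : ℂ) * Complex.I *
        (((∑ i, (m i).val * (u i).val : ℕ)) : ℂ) / (N : ℂ))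
      = -(2 * (Real.pi : ℂ) * Complex.I * (((∑ i, (m i).val * (u i).val : ℕ)) : ℂ)) / (N : ℂ)
      by ring, ← charE_natCast]
  congr 1
  push_cast [ZMod.natCast_val, ZMod.cast_id]
  rfl

lemma dft_shift {N r : ℕ} [NeZero N] (x : (Fin r → ZMod N) → ℂ) (m τ : Fin r → ZMod N) :
    dft (fun u => x (u - τ)) m = charE N (∑ i, m i * τ i) * dft x m := by
  unfold dft
  simp_rw [expTerm_eq, Finset.mul_sum]
  exact (Fintype.sum_bijective (fun v => v + τ) (Equiv.addRight τ).bijective _ _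
    (fun v => by
      have h1 : v + τ - τ = v := add_sub_cancel_right v τ
      have h2 : (∑ i, m i * (v + τ) i) = (∑ i, m i * v i) + (∑ i, m i * τ i) := by
        simp [Pi.add_apply, mul_add, Finset.sum_add_distrib]
      rw [h1, h2, charE_add]
      ring)).symm

lemma pH_zero (k : ℤ) : phaseHarmonic k 0 = 0 := by simp [phaseHarmonic]

lemma pH_eq (k : ℤ) {z : ℂ} (hz : z ≠ 0) :
    phaseHarmonic k z = ((‖z‖ : ℝ) : ℂ) * (z / ((‖z‖ : ℝ) : ℂ)) ^ k := by
  unfold phaseHarmonic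
  congr 1
  rw [show ((k : ℂ) * (Complex.arg z : ℂ) * Complex.I)
      = (k : ℂ) * ((Complex.arg z : ℂ) * Complex.I) by ring, Complex.exp_int_mul]
  congr 1
  rw [eq_div_iff (by simpa using norm_ne_zero_iff.mpr hz), mul_comm]
  exact Complex.norm_mul_exp_arg_mul_I z

lemma pH_smul (k : ℤ) (θ : ℝ) (z : ℂ) :
    phaseHarmonic k (Complex.exp ((θ : ℂ) * Complex.I) * z)
      = Complex.exp ((k : ℂ) * (θ : ℂ) * Complex.I) * phaseHarmonic k z := by
  rcases eq_or_ne z 0 with rfl | hz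
  · simp [pH_zero]
  · have hc : Complex.exp ((θ : ℂ) * Complex.I) ≠ 0 := Complex.exp_ne_zero _
    have habs : ‖Complex.exp ((θ : ℂ) * Complex.I) * z‖ = ‖z‖ := by
      rw [norm_mul, Complex.norm_exp]; simp
    rw [pH_eq k (mul_ne_zero hc hz), pH_eq k hz, habs,
      show Complex.exp ((θ : ℂ) * Complex.I) * z / ((‖z‖ : ℝ) : ℂ)
        = Complex.exp ((θ : ℂ) * Complex.I) * (z / ((‖z‖ : ℝ) : ℂ)) by ring,
      mul_zpow, ← Complex.exp_int_mul,
      show (k : ℂ) * ((θ : ℂ) * Complex.I) = (k : ℂ) * (θ : ℂ) * Complex.I by ring]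
    ring

lemma charE_exp_form {N : ℕ} [NeZero N] (t : ZMod N) :
    charE N t = Complex.exp (((-(2 * Real.pi * (t.val : ℝ) / N) : ℝ) : ℂ) * Complex.I) := by
  unfold charE
  congr 1
  push_cast
  ring

lemma exp_k_theta {N : ℕ} [NeZero N] (k : ℤ) (t : ZMod N) :
    Complex.exp ((k : ℂ) * ((-(2 * Real.pi * (t.val : ℝ) / N) : ℝ) : ℂ) * Complex.I)
      = charE N ((k : ZMod N) * t) := by
  have h : ((k * (t.val : ℤ) : ℤ) : ZMod N) = (k : ZMod N) * t := by
    push_cast [ZMod.natCast_val, ZMod.cast_id]; rfl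
  rw [← h, charE_intCast]
  congr 1
  push_cast
  ring

lemma pH_dft_shift {N r : ℕ} [NeZero N] (k : ℤ) (m τ : Fin r → ZMod N)
    (x : (Fin r → ZMod N) → ℂ) :
    phaseHarmonic k (dft (fun u => x (u - τ)) m)
      = charE N ((k : ZMod N) * ∑ i, m i * τ i) * phaseHarmonic k (dft x m) := by
  rw [dft_shift, charE_exp_form, pH_smul, exp_k_theta]


lemma measurable_conj' : Measurable fun z : ℂ => (starRingEnd ℂ) z :=
  continuous_star.measurable

lemma measurable_dft_comp {N r : ℕ} [NeZero N] (m : Fin r → ZMod N) :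
    Measurable (fun x : (Fin r → ZMod N) → ℝ => dft (fun u => ((x u : ℝ) : ℂ)) m) := by
  unfold dft
  apply Finset.measurable_sum
  intro u _
  exact (Complex.measurable_ofReal.comp (measurable_pi_apply u)).mul_const _

lemma measurable_pH (k : ℤ) : Measurable (phaseHarmonic k) := by
  unfold phaseHarmonic
  exact (Complex.measurable_ofReal.comp continuous_norm.measurable).mul
    (Complex.continuous_exp.measurable.comp
      ((measurable_const.mul (Complex.measurable_ofReal.comp Complex.measurable_arg)).mul_const _))

lemma integral_shift {N r : ℕ} [NeZero N] {Ω : Type*} [MeasurableSpace Ω] (μ : Measure Ω)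
    (X : Ω → (Fin r → ZMod N) → ℝ) (hmeas : Measurable X)
    (hstat : ∀ τ : Fin r → ZMod N,
      Measure.map (fun ω => fun u => X ω (u - τ)) μ = Measure.map X μ)
    (G : ((Fin r → ZMod N) → ℝ) → ℂ) (hG : Measurable G) (τ : Fin r → ZMod N) :
    ∫ ω, G (fun u => X ω (u - τ)) ∂μ = ∫ ω, G (X ω) ∂μ := by
  have hsh : Measurable (fun x : (Fin r → ZMod N) → ℝ => (fun u => x (u - τ))) :=
    measurable_pi_lambda _ fun u => measurable_pi_apply _
  calc ∫ ω, G (fun u => X ω (u - τ)) ∂μ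
      = ∫ x, G x ∂(Measure.map (fun ω => fun u => X ω (u - τ)) μ) :=
        (integral_map (hsh.comp hmeas).aemeasurable hG.aestronglyMeasurable).symm
    _ = ∫ x, G x ∂(Measure.map X μ) := by rw [hstat τ]
    _ = ∫ ω, G (X ω) ∂μ := integral_map hmeas.aemeasurable hG.aestronglyMeasurable

lemma eq_zero_of_self_mul {c P : ℂ} (h : P = c * P) (hc : c ≠ 1) : P = 0 := by
  have h0 : (1 - c) * P = 0 := by linear_combination h
  rcases mul_eq_zero.mp h0 with h1 | h1
  · exact absurd (sub_eq_zero.mp h1).symm hc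
  · exact h1

theorem stationary_dft_phaseHarmonic_uncorrelated {N r : ℕ} [NeZero N]
    {Ω : Type*} [MeasurableSpace Ω] (μ : Measure Ω) [IsProbabilityMeasure μ]
    (X : Ω → (Fin r → ZMod N) → ℝ) (hmeas : Measurable X)
    (hL2 : ∀ u, MemLp (fun ω => X ω u) 2 μ)
    (hstat : ∀ τ : Fin r → ZMod N,
      Measure.map (fun ω => fun u => X ω (u - τ)) μ = Measure.map X μ)
    (k k' : ℤ) (m m' : Fin r → ZMod N)
    (hfreq : (fun i => (k : ZMod N) * m i) ≠ fun i => (k' : ZMod N) * m' i) :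
    ccov μ (fun ω => phaseHarmonic k (dft (fun u => ((X ω u : ℝ) : ℂ)) m))
      (fun ω => phaseHarmonic k' (dft (fun u => ((X ω u : ℝ) : ℂ)) m')) = 0 := by
  obtain ⟨i₀, hi₀⟩ : ∃ i, (k : ZMod N) * m i ≠ (k' : ZMod N) * m' i := by
    by_contra h
    push_neg at h
    exact hfreq (funext h)
  have hsum : ∀ (j : Fin r) (mm : Fin r → ZMod N),
      (∑ i, mm i * (Pi.single j (1 : ZMod N) : Fin r → ZMod N) i) = mm j := by
    intro j mm
    simp [Pi.single_apply, mul_ite]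
  set F1 : ((Fin r → ZMod N) → ℝ) → ℂ :=
    fun x => phaseHarmonic k (dft (fun u => ((x u : ℝ) : ℂ)) m) with hF1def
  set F2 : ((Fin r → ZMod N) → ℝ) → ℂ :=
    fun x => phaseHarmonic k' (dft (fun u => ((x u : ℝ) : ℂ)) m') with hF2def
  have hF1 : Measurable F1 := (measurable_pH k).comp (measurable_dft_comp m)
  have hF2 : Measurable F2 := (measurable_pH k').comp (measurable_dft_comp m')
  -- generic mean-vanishing
  have hmean : ∀ (l : ℤ) (n : Fin r → ZMod N) (j : Fin r), (l : ZMod N) * n j ≠ 0 →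
      ∫ ω, phaseHarmonic l (dft (fun u => ((X ω u : ℝ) : ℂ)) n) ∂μ = 0 := by
    intro l n j hj
    set τ : Fin r → ZMod N := Pi.single j (1 : ZMod N) with hτ
    set G : ((Fin r → ZMod N) → ℝ) → ℂ :=
      fun x => phaseHarmonic l (dft (fun u => ((x u : ℝ) : ℂ)) n) with hG
    have hGm : Measurable G := (measurable_pH l).comp (measurable_dft_comp n)
    set c : ℂ := charE N ((l : ZMod N) * n j) with hc
    apply eq_zero_of_self_mul (c := c) _ (charE_ne_one hj)
    calc ∫ ω, G (X ω) ∂μ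
        = ∫ ω, G (fun u => X ω (u - τ)) ∂μ := (integral_shift μ X hmeas hstat G hGm τ).symm
      _ = ∫ ω, c * G (X ω) ∂μ := by
          congr 1
          funext ω
          have hs : (∑ i, n i * τ i) = n j := by rw [hτ]; exact hsum j n
          have h := pH_dft_shift (N := N) l n τ (fun v => ((X ω v : ℝ) : ℂ))
          rw [hs] at h
          exact h
      _ = c * ∫ ω, G (X ω) ∂μ := integral_const_mul c _
  -- product term
  have hprod : ∫ ω, F1 (X ω) * (starRingEnd ℂ) (F2 (X ω)) ∂μ = 0 := by
    set τ : Fin r → ZMod N := Pi.single i₀ (1 : ZMod N) with hτ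
    set G : ((Fin r → ZMod N) → ℝ) → ℂ := fun x => F1 x * (starRingEnd ℂ) (F2 x) with hG
    have hGm : Measurable G := hF1.mul (measurable_conj'.comp hF2)
    set c : ℂ := charE N ((k : ZMod N) * m i₀ - (k' : ZMod N) * m' i₀) with hc
    apply eq_zero_of_self_mul (c := c) _ (charE_ne_one (sub_ne_zero.mpr hi₀))
    calc ∫ ω, G (X ω) ∂μ
        = ∫ ω, G (fun u => X ω (u - τ)) ∂μ := (integral_shift μ X hmeas hstat G hGm τ).symm
      _ = ∫ ω, c * G (X ω) ∂μ := by
          congr 1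
          funext ω
          have hs1 : (∑ i, m i * τ i) = m i₀ := by rw [hτ]; exact hsum i₀ m
          have hs2 : (∑ i, m' i * τ i) = m' i₀ := by rw [hτ]; exact hsum i₀ m'
          have h1 := pH_dft_shift (N := N) k m τ (fun v => ((X ω v : ℝ) : ℂ))
          have h2 := pH_dft_shift (N := N) k' m' τ (fun v => ((X ω v : ℝ) : ℂ))
          rw [hs1] at h1
          rw [hs2] at h2
          show phaseHarmonic k (dft (fun u => ((X ω (u - τ) : ℝ) : ℂ)) m) *
              (starRingEnd ℂ) (phaseHarmonic k' (dft (fun u => ((X ω (u - τ) : ℝ) : ℂ)) m'))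
            = c * (phaseHarmonic k (dft (fun u => ((X ω u : ℝ) : ℂ)) m) *
              (starRingEnd ℂ) (phaseHarmonic k' (dft (fun u => ((X ω u : ℝ) : ℂ)) m')))
          rw [h1, h2, map_mul, charE_conj, hc, sub_eq_add_neg, charE_add]
          ring
      _ = c * ∫ ω, G (X ω) ∂μ := integral_const_mul c _
  unfold ccov
  simp only []
  rw [hprod]
  by_cases hkm : ∀ i, (k : ZMod N) * m i = 0
  · have hB : (k' : ZMod N) * m' i₀ ≠ 0 := fun h0 => hi₀ (by rw [hkm i₀, h0])
    rw [hmean k' m' i₀ hB]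
    simp
  · push_neg at hkm
    obtain ⟨i₁, hi₁⟩ := hkm
    rw [hmean k m i₁ hi₁]
    simp
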